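/- arXiv:1607.03294 — 2 statements merged into one kernel-verified Lean document; each statement's English description precedes it below -/
import Mathlib

section
/- For every real μ ≠ 0 and all real numbers T, A with T > 0 and T ≤ A ≤ T + √T/|μ|, one has (2/(μ²·T)) · ∫_T^A F(2/(μ²·x)) · (1/x) dx ≤ (1 + 1/(|μ|·√T)) · (1/(|μ|·√T)). -/
open MeasureTheory Real

/-- The exponential integral `E1 x = ∫_x^∞ e^{-t}/t dt`. -/
noncomputable def E1 (x : ℝ) : ℝ := ∫ t in Set.Ioi x, Real.exp (-t) / t

/-- `F x = e^x * E1 x`. -/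
noncomputable def F (x : ℝ) : ℝ := Real.exp x * E1 x

lemma E1_nonneg {y : ℝ} (hy : 0 < y) : 0 ≤ E1 y := by
  apply setIntegral_nonneg measurableSet_Ioi
  intro t ht
  have : (0:ℝ) < t := hy.trans ht
  positivity

lemma exp_integrableOn {y : ℝ} : IntegrableOn (fun t => Real.exp (-t)) (Set.Ioi y) := by
  have := exp_neg_integrableOn_Ioi y (b := 1) one_pos
  simpa using this

lemma E1_le {y : ℝ} (hy : 0 < y) : E1 y ≤ Real.exp (-y) / y := by
  have hint : IntegrableOn (fun t => Real.exp (-t) / t) (Set.Ioi y) := by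
    apply Integrable.mono' (g := fun t => Real.exp (-t) * (1/y)) (exp_integrableOn.mul_const _)
    · exact ((Real.measurable_exp.comp measurable_neg).div measurable_id).aestronglyMeasurable
    · filter_upwards [ae_restrict_mem measurableSet_Ioi] with t ht
      have hty : y < t := ht
      have ht0 : (0:ℝ) < t := hy.trans hty
      rw [Real.norm_eq_abs, abs_div, abs_of_nonneg (Real.exp_pos _).le, abs_of_pos ht0,
        div_eq_mul_inv, one_div]
      gcongr
  have h2 : ∫ t in Set.Ioi y, Real.exp (-t) / t ≤ ∫ t in Set.Ioi y, Real.exp (-t) * (1/y) := by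
    apply setIntegral_mono_on hint (exp_integrableOn.mul_const _) measurableSet_Ioi
    intro t ht
    have hty : y < t := ht
    have ht0 : (0:ℝ) < t := hy.trans hty
    rw [div_eq_mul_inv, one_div]
    gcongr
  have h3 : ∫ t in Set.Ioi y, Real.exp (-t) * (1/y) = Real.exp (-y) * (1/y) := by
    rw [integral_mul_const, integral_exp_neg_Ioi]
  rw [E1]
  calc _ ≤ _ := h2
    _ = Real.exp (-y) * (1/y) := h3
    _ = Real.exp (-y) / y := by ring

lemma F_le {y : ℝ} (hy : 0 < y) : F y ≤ 1 / y := by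
  have h := E1_le hy
  have h2 : F y ≤ Real.exp y * (Real.exp (-y) / y) := by
    unfold F; gcongr
  calc F y ≤ _ := h2
    _ = Real.exp y * Real.exp (-y) / y := by ring
    _ = 1 / y := by rw [← Real.exp_add]; simp

theorem J2_bound_sqrt (μ T A : ℝ) (hμ : μ ≠ 0) (hT : 0 < T) (hTA : T ≤ A)
    (hA : A ≤ T + Real.sqrt T / |μ|) :
    (2 / (μ ^ 2 * T)) * (∫ x in T..A, F (2 / (μ ^ 2 * x)) * (1 / x)) ≤
      (1 + 1 / (|μ| * Real.sqrt T)) * (1 / (|μ| * Real.sqrt T)) := by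
  have hμ2 : (0:ℝ) < μ ^ 2 := by positivity
  have hμa : (0:ℝ) < |μ| := abs_pos.mpr hμ
  have hsT : 0 < Real.sqrt T := Real.sqrt_pos.mpr hT
  have hbound : ∀ x ∈ Set.uIoc T A, ‖F (2 / (μ ^ 2 * x)) * (1 / x)‖ ≤ μ ^ 2 / 2 := by
    intro x hx
    rw [Set.uIoc_of_le hTA] at hx
    have hx0 : 0 < x := hT.trans hx.1
    have hy : 0 < 2 / (μ ^ 2 * x) := by positivity
    have hF0 : 0 ≤ F (2 / (μ ^ 2 * x)) := by
      unfold F; exact mul_nonneg (Real.exp_pos _).le (E1_nonneg hy)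
    have hF : F (2 / (μ ^ 2 * x)) ≤ μ ^ 2 * x / 2 := by
      have := F_le hy
      calc F (2 / (μ ^ 2 * x)) ≤ 1 / (2 / (μ ^ 2 * x)) := this
        _ = μ ^ 2 * x / 2 := by field_simp
    rw [Real.norm_eq_abs, abs_mul, abs_of_nonneg hF0, abs_of_pos (by positivity : (0:ℝ) < 1/x)]
    calc F (2 / (μ ^ 2 * x)) * (1 / x) ≤ (μ ^ 2 * x / 2) * (1 / x) := by gcongr
      _ = μ ^ 2 / 2 := by field_simp
  have hI := intervalIntegral.norm_integral_le_of_norm_le_const hbound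
  set I := ∫ x in T..A, F (2 / (μ ^ 2 * x)) * (1 / x) with hIdef
  rw [Real.norm_eq_abs, abs_of_nonneg (by linarith : (0:ℝ) ≤ A - T)] at hI
  have hIle : I ≤ μ ^ 2 / 2 * (A - T) := (le_abs_self I).trans hI
  have hAT : A - T ≤ Real.sqrt T / |μ| := by linarith
  have step : (2 / (μ ^ 2 * T)) * I ≤ 1 / (|μ| * Real.sqrt T) := by
    have : (2 / (μ ^ 2 * T)) * I ≤ (2 / (μ ^ 2 * T)) * (μ ^ 2 / 2 * (Real.sqrt T / |μ|)) := by
      have h1 : I ≤ μ ^ 2 / 2 * (Real.sqrt T / |μ|) := by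
        refine hIle.trans ?_
        gcongr
      gcongr
    refine this.trans (le_of_eq ?_)
    have hTst : Real.sqrt T * Real.sqrt T = T := Real.mul_self_sqrt hT.le
    field_simp
    linear_combination hTst
  refine step.trans ?_
  have ha : 0 < 1 / (|μ| * Real.sqrt T) := by positivity
  nlinarith [ha]
end

section
/- Let μ ≠ 0 be real and let A : (0,∞) → ℝ be any function satisfying T ≤ A(T) ≤ T + √T/|μ| for all T > 0. Then for every T > 0 the quantity G(T) := F(2/(μ²·A(T))) - F(2/(μ²·T)) + (2/(μ²·T)) · ∫_T^{A(T)} F(2/(μ²·x)) · (1/x) dx satisfies 0 ≤ G(T) ≤ 2/(|μ|·√T) + 1/(μ²·T); in particular G(T) → 0 as T → +∞. -/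
open MeasureTheory Real Filter Topology

lemma expNegInt : IntegrableOn (fun s => Real.exp (-s)) (Set.Ioi (0:ℝ)) := by
  simpa using exp_neg_integrableOn_Ioi 0 one_pos

lemma integrableOn_aux {x : ℝ} (hx : 0 < x) :
    IntegrableOn (fun s => Real.exp (-s) / (x + s)) (Set.Ioi (0:ℝ)) := by
  have hint : IntegrableOn (fun s => Real.exp (-s) * (1 / x)) (Set.Ioi (0:ℝ)) :=
    expNegInt.mul_const _
  refine hint.mono' ?_ ?_
  · apply ContinuousOn.aestronglyMeasurable ?_ measurableSet_Ioi
    apply (Real.continuous_exp.comp continuous_neg).continuousOn.div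
      (continuous_const.add continuous_id).continuousOn
    intro s hs
    have : (0:ℝ) < s := hs
    show x + s ≠ 0
    positivity
  · filter_upwards [ae_restrict_mem measurableSet_Ioi] with s hs
    have hs0 : (0:ℝ) < s := hs
    have hxs : 0 < x + s := by linarith
    rw [Real.norm_eq_abs, abs_of_nonneg (by positivity), mul_one_div]
    gcongr
    linarith

lemma F_eq {x : ℝ} (hx : 0 < x) :
    F x = ∫ s in Set.Ioi (0:ℝ), Real.exp (-s) / (x + s) := by
  have h := (measurePreserving_add_right volume x).setIntegral_preimage_emb
      (measurableEmbedding_addRight x) (fun t => Real.exp (-t) / t) (Set.Ioi x)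
  have hpre : (fun s : ℝ => s + x) ⁻¹' Set.Ioi x = Set.Ioi 0 := by
    rw [Set.preimage_add_const_Ioi]; simp
  rw [hpre] at h
  rw [F, E1, ← h, ← integral_const_mul]
  apply setIntegral_congr_fun measurableSet_Ioi
  intro s hs
  have hs0 : (0:ℝ) < s := hs
  have hsx : s + x ≠ 0 := by positivity
  simp only
  rw [mul_div_assoc', ← Real.exp_add]
  have h1 : x + -(s + x) = -s := by ring
  rw [h1, add_comm s x]

lemma F_nonneg {x : ℝ} (hx : 0 < x) : 0 ≤ F x := by
  rw [F_eq hx]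
  apply setIntegral_nonneg measurableSet_Ioi
  intro s hs
  have hs0 : (0:ℝ) < s := hs
  positivity

lemma F_le_s8 {x : ℝ} (hx : 0 < x) : F x ≤ 1 / x := by
  rw [F_eq hx]
  have h1 : ∫ s in Set.Ioi (0:ℝ), Real.exp (-s) * (1 / x) = 1 / x := by
    rw [integral_mul_const, integral_exp_neg_Ioi_zero, one_mul]
  rw [← h1]
  apply setIntegral_mono_on (integrableOn_aux hx) (expNegInt.mul_const _) measurableSet_Ioi
  intro s hs
  have hs0 : (0:ℝ) < s := hs
  rw [mul_one_div]
  gcongr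
  linarith

lemma F_anti {y z : ℝ} (hy : 0 < y) (hyz : y ≤ z) : F z ≤ F y := by
  have hz : 0 < z := hy.trans_le hyz
  rw [F_eq hy, F_eq hz]
  apply setIntegral_mono_on (integrableOn_aux hz) (integrableOn_aux hy) measurableSet_Ioi
  intro s hs
  have hs0 : (0:ℝ) < s := hs
  gcongr <;> linarith

lemma integral_one_div_sub {y z : ℝ} (hy : 0 < y) (hyz : y ≤ z) :
    IntegrableOn (fun s => 1 / (y + s) - 1 / (z + s)) (Set.Ioi (0:ℝ)) ∧
      ∫ s in Set.Ioi (0:ℝ), (1 / (y + s) - 1 / (z + s)) = Real.log z - Real.log y := by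
  have hz : 0 < z := hy.trans_le hyz
  have hderiv : ∀ s ∈ Set.Ici (0:ℝ),
      HasDerivAt (fun s => Real.log (y + s) - Real.log (z + s))
        (1 / (y + s) - 1 / (z + s)) s := by
    intro s hs
    have hs0 : (0:ℝ) ≤ s := hs
    have hy' : 0 < y + s := by linarith
    have hz' : 0 < z + s := by linarith
    have h1 : HasDerivAt (fun s : ℝ => Real.log (y + s)) (1 / (y + s)) s := by
      simpa using ((hasDerivAt_id s).const_add y).log hy'.ne'
    have h2 : HasDerivAt (fun s : ℝ => Real.log (z + s)) (1 / (z + s)) s := by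
      simpa using ((hasDerivAt_id s).const_add z).log hz'.ne'
    exact h1.sub h2
  have hpos : ∀ s ∈ Set.Ioi (0:ℝ), 0 ≤ 1 / (y + s) - 1 / (z + s) := by
    intro s hs
    have hs0 : (0:ℝ) < s := hs
    have hy' : 0 < y + s := by linarith
    have := one_div_le_one_div_of_le hy' (by linarith : y + s ≤ z + s)
    linarith
  have hlim : Tendsto (fun s => Real.log (y + s) - Real.log (z + s)) atTop (𝓝 0) := by
    have h0 : Tendsto (fun s : ℝ => (z - y) / (z + s)) atTop (𝓝 0) :=
      Tendsto.div_atTop tendsto_const_nhds (tendsto_atTop_add_const_left atTop z tendsto_id)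
    have h1 : Tendsto (fun s : ℝ => (y + s) / (z + s)) atTop (𝓝 1) := by
      have h2 : Tendsto (fun s : ℝ => 1 - (z - y) / (z + s)) atTop (𝓝 (1 - 0)) :=
        Tendsto.sub tendsto_const_nhds h0
      rw [sub_zero] at h2
      apply h2.congr'
      filter_upwards [eventually_gt_atTop (0:ℝ)] with s hs
      have hz' : z + s ≠ 0 := by positivity
      field_simp
      ring
    have h3 := ((Real.continuousAt_log one_ne_zero).tendsto.comp h1)
    rw [Real.log_one] at h3
    apply h3.congr'
    filter_upwards [eventually_gt_atTop (0:ℝ)] with s hs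
    have hy' : y + s ≠ 0 := by positivity
    have hz' : z + s ≠ 0 := by positivity
    simp only [Function.comp_apply]
    rw [Real.log_div hy' hz']
  refine ⟨integrableOn_Ioi_deriv_of_nonneg' hderiv hpos hlim, ?_⟩
  have h := integral_Ioi_of_hasDerivAt_of_nonneg' hderiv hpos hlim
  rw [h]
  simp

lemma F_sub_le {y z : ℝ} (hy : 0 < y) (hyz : y ≤ z) :
    F y - F z ≤ Real.log z - Real.log y := by
  have hz : 0 < z := hy.trans_le hyz
  obtain ⟨hint, hval⟩ := integral_one_div_sub hy hyz
  rw [F_eq hy, F_eq hz, ← integral_sub (integrableOn_aux hy) (integrableOn_aux hz), ← hval]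
  apply setIntegral_mono_on ((integrableOn_aux hy).sub (integrableOn_aux hz)) hint
    measurableSet_Ioi
  intro s hs
  have hs0 : (0:ℝ) < s := hs
  have hy' : 0 < y + s := by linarith
  have hz' : 0 < z + s := by linarith
  have he : Real.exp (-s) ≤ 1 := Real.exp_le_one_iff.mpr (by linarith)
  have hb : 0 ≤ 1 / (y + s) - 1 / (z + s) := by
    have := one_div_le_one_div_of_le hy' (by linarith : y + s ≤ z + s)
    linarith
  calc Real.exp (-s) / (y + s) - Real.exp (-s) / (z + s)
      = Real.exp (-s) * (1 / (y + s) - 1 / (z + s)) := by ring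
    _ ≤ 1 * (1 / (y + s) - 1 / (z + s)) := mul_le_mul_of_nonneg_right he hb
    _ = 1 / (y + s) - 1 / (z + s) := one_mul _

theorem G_bound_and_tendsto_zero (μ : ℝ) (hμ : μ ≠ 0) (A : ℝ → ℝ)
    (hA : ∀ T : ℝ, 0 < T → T ≤ A T ∧ A T ≤ T + Real.sqrt T / |μ|)
    (G : ℝ → ℝ)
    (hG : ∀ T : ℝ, G T =
      F (2 / (μ ^ 2 * A T)) - F (2 / (μ ^ 2 * T)) +
        (2 / (μ ^ 2 * T)) * (∫ x in T..(A T), F (2 / (μ ^ 2 * x)) * (1 / x))) :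
    (∀ T : ℝ, 0 < T →
      0 ≤ G T ∧ G T ≤ 2 / (|μ| * Real.sqrt T) + 1 / (μ ^ 2 * T)) ∧
      Tendsto G atTop (nhds 0) := by
  have hμ2 : 0 < μ ^ 2 := by positivity
  have habs : 0 < |μ| := abs_pos.mpr hμ
  have hbound : ∀ T : ℝ, 0 < T →
      0 ≤ G T ∧ G T ≤ 2 / (|μ| * Real.sqrt T) + 1 / (μ ^ 2 * T) := by
    intro T hT
    obtain ⟨hTA, hAup⟩ := hA T hT
    set B := A T with hBdef
    have hB0 : 0 < B := lt_of_lt_of_le hT hTA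
    have hy0 : 0 < 2 / (μ ^ 2 * B) := by positivity
    have hz0 : 0 < 2 / (μ ^ 2 * T) := by positivity
    have hyz : 2 / (μ ^ 2 * B) ≤ 2 / (μ ^ 2 * T) := by
      exact (div_le_div_iff_of_pos_left two_pos (mul_pos hμ2 hB0) (mul_pos hμ2 hT)).mpr
        (mul_le_mul_of_nonneg_left hTA hμ2.le)
    have hmono : MonotoneOn (fun x => F (2 / (μ ^ 2 * x))) (Set.uIcc T B) := by
      rw [Set.uIcc_of_le hTA]
      intro u hu v hv huv
      have hu0 : 0 < u := lt_of_lt_of_le hT hu.1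
      have hv0 : 0 < v := lt_of_lt_of_le hT hv.1
      apply F_anti (show 0 < 2 / (μ ^ 2 * v) by positivity)
      exact (div_le_div_iff_of_pos_left two_pos (mul_pos hμ2 hv0) (mul_pos hμ2 hu0)).mpr
        (mul_le_mul_of_nonneg_left huv hμ2.le)
    have hii : IntervalIntegrable (fun x => F (2 / (μ ^ 2 * x)) * (1 / x)) volume T B := by
      apply hmono.intervalIntegrable.mul_continuousOn
      rw [Set.uIcc_of_le hTA]
      apply continuousOn_const.div continuousOn_id
      intro x hx
      exact (lt_of_lt_of_le hT hx.1).ne'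
    have hI0 : 0 ≤ ∫ x in T..B, F (2 / (μ ^ 2 * x)) * (1 / x) := by
      apply intervalIntegral.integral_nonneg hTA
      intro x hx
      have hx0 : 0 < x := lt_of_lt_of_le hT hx.1
      exact mul_nonneg (F_nonneg (by positivity)) (by positivity)
    have hIle : (∫ x in T..B, F (2 / (μ ^ 2 * x)) * (1 / x)) ≤ (B - T) * μ ^ 2 / 2 := by
      have h := intervalIntegral.integral_mono_on hTA hii intervalIntegrable_const
        (g := fun _ => (μ ^ 2 / 2 : ℝ)) ?_
      -- value of constant integral
      · simpa [smul_eq_mul] using h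
      intro x hx
      have hx0 : 0 < x := lt_of_lt_of_le hT hx.1
      have h1 := F_le_s8 (show 0 < 2 / (μ ^ 2 * x) by positivity)
      have h2 : 1 / (2 / (μ ^ 2 * x)) = μ ^ 2 * x / 2 := by
        field_simp
      calc F (2 / (μ ^ 2 * x)) * (1 / x) ≤ (μ ^ 2 * x / 2) * (1 / x) := by
            apply mul_le_mul_of_nonneg_right _ (by positivity)
            rw [← h2]; exact h1
        _ = μ ^ 2 / 2 := by field_simp
    rw [hG T, ← hBdef]
    have hanti := F_anti hy0 hyz
    constructor
    · have := mul_nonneg hz0.le hI0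
      linarith
    · have hsq : 0 < Real.sqrt T := Real.sqrt_pos.mpr hT
      have hsq2 : Real.sqrt T * Real.sqrt T = T := Real.mul_self_sqrt hT.le
      have key : (B - T) / T ≤ 1 / (|μ| * Real.sqrt T) := by
        rw [div_le_div_iff₀ hT (by positivity)]
        have hBT : B - T ≤ Real.sqrt T / |μ| := by linarith
        have h1 : (B - T) * (|μ| * Real.sqrt T) ≤ (Real.sqrt T / |μ|) * (|μ| * Real.sqrt T) := by
          apply mul_le_mul_of_nonneg_right hBT (by positivity)
        have h2 : (Real.sqrt T / |μ|) * (|μ| * Real.sqrt T) = T := by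
          field_simp
          linear_combination hsq2
        linarith
      have hlog : Real.log (2 / (μ ^ 2 * T)) - Real.log (2 / (μ ^ 2 * B)) ≤ (B - T) / T := by
        rw [← Real.log_div hz0.ne' hy0.ne']
        have hzy : (2 / (μ ^ 2 * T)) / (2 / (μ ^ 2 * B)) = B / T := by
          field_simp
        rw [hzy]
        have h3 := Real.log_le_sub_one_of_pos (show 0 < B / T by positivity)
        have h4 : B / T - 1 = (B - T) / T := by field_simp
        linarith
      have h1 : F (2 / (μ ^ 2 * B)) - F (2 / (μ ^ 2 * T)) ≤ (B - T) / T := by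
        have := F_sub_le hy0 hyz
        linarith
      have h2 : (2 / (μ ^ 2 * T)) * (∫ x in T..B, F (2 / (μ ^ 2 * x)) * (1 / x))
          ≤ (B - T) / T := by
        have h5 := mul_le_mul_of_nonneg_left hIle hz0.le
        have h6 : (2 / (μ ^ 2 * T)) * ((B - T) * μ ^ 2 / 2) = (B - T) / T := by
          field_simp
        linarith
      have h7 : 0 ≤ 1 / (μ ^ 2 * T) := by positivity
      have h8 : 2 / (|μ| * Real.sqrt T) = 2 * (1 / (|μ| * Real.sqrt T)) := by ring
      linarith
  refine ⟨hbound, ?_⟩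
  have hsqrt : Tendsto (fun T : ℝ => Real.sqrt T) atTop atTop := by
    apply (tendsto_rpow_atTop (show (0:ℝ) < 1 / 2 by norm_num)).congr'
    filter_upwards [eventually_ge_atTop (0:ℝ)] with T hT
    exact (Real.sqrt_eq_rpow T).symm
  have h1 : Tendsto (fun T : ℝ => 2 / (|μ| * Real.sqrt T)) atTop (𝓝 0) :=
    Tendsto.div_atTop tendsto_const_nhds (Tendsto.const_mul_atTop habs hsqrt)
  have h2 : Tendsto (fun T : ℝ => 1 / (μ ^ 2 * T)) atTop (𝓝 0) :=
    Tendsto.div_atTop tendsto_const_nhds (Tendsto.const_mul_atTop hμ2 tendsto_id)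
  have hub : Tendsto (fun T : ℝ => 2 / (|μ| * Real.sqrt T) + 1 / (μ ^ 2 * T)) atTop (𝓝 0) := by
    simpa using h1.add h2
  apply squeeze_zero' ?_ ?_ hub
  · filter_upwards [eventually_gt_atTop (0:ℝ)] with T hT
    exact (hbound T hT).1
  · filter_upwards [eventually_gt_atTop (0:ℝ)] with T hT
    exact (hbound T hT).2
end
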